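/- Let 0 < δ ≤ 1/(64·d²·L) and let x, y ∈ ℝ^d satisfy x = y − δ∇U(y) + √(2δ)·T. Then the matrix I − δ∇²U(y) is invertible and |det(I − δ∇²U(y))^{-1} − 1| ≤ 2·δ·d·L·(‖x‖₂ + 1). -/

import Mathlib

open Matrix Finset

/-- The Hessian matrix of `U : ℝ^d → ℝ` at `x`. -/
noncomputable def hessMat {d : ℕ} (U : EuclideanSpace ℝ (Fin d) → ℝ)
    (x : EuclideanSpace ℝ (Fin d)) : Matrix (Fin d) (Fin d) ℝ :=
  fun i j =>
    iteratedFDeriv ℝ 2 U x ![EuclideanSpace.single i 1, EuclideanSpace.single j 1]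

lemma stmt5_hessMat_eq {d : ℕ} (U : EuclideanSpace ℝ (Fin d) → ℝ) (y : EuclideanSpace ℝ (Fin d))
    (j k : Fin d) : hessMat U y j k
      = fderiv ℝ (fderiv ℝ U) y (EuclideanSpace.single j 1) (EuclideanSpace.single k 1) := by
  rw [hessMat, iteratedFDeriv_two_apply]; simp

lemma stmt5_hess_herm {d : ℕ} (U : EuclideanSpace ℝ (Fin d) → ℝ) (y : EuclideanSpace ℝ (Fin d))
    (hU : ContDiff ℝ 3 U) : (hessMat U y).IsHermitian := by
  apply Matrix.ext
  intro j k
  rw [Matrix.conjTranspose_apply, star_trivial, stmt5_hessMat_eq, stmt5_hessMat_eq]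
  exact (hU.contDiffAt.isSymmSndFDerivAt (by norm_num)) _ _

lemma stmt5_expand {d : ℕ}
    (G : EuclideanSpace ℝ (Fin d) →L[ℝ] EuclideanSpace ℝ (Fin d) →L[ℝ] ℝ)
    (v w : EuclideanSpace ℝ (Fin d)) :
    G v w = ∑ j, ∑ k, v j * w k *
      G (EuclideanSpace.single j 1) (EuclideanSpace.single k 1) := by
  have hv : v = ∑ j, v j • EuclideanSpace.single j 1 := by
    have := (EuclideanSpace.basisFun (Fin d) ℝ).sum_repr v
    simpa [EuclideanSpace.basisFun_apply, EuclideanSpace.basisFun_repr] using this.symm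
  have hw : w = ∑ k, w k • EuclideanSpace.single k 1 := by
    have := (EuclideanSpace.basisFun (Fin d) ℝ).sum_repr w
    simpa [EuclideanSpace.basisFun_apply, EuclideanSpace.basisFun_repr] using this.symm
  conv_lhs => rw [hv, hw]
  simp [map_sum, ContinuousLinearMap.sum_apply, ContinuousLinearMap.smul_apply,
    Finset.mul_sum, mul_assoc]
  rw [Finset.sum_comm]
  exact Finset.sum_congr rfl fun j _ => Finset.sum_congr rfl fun k _ => by ring

lemma stmt5_hess_bound {d : ℕ} (U : EuclideanSpace ℝ (Fin d) → ℝ)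
    (y : EuclideanSpace ℝ (Fin d))
    (L : ℝ) (hHess : ‖iteratedFDeriv ℝ 2 U y‖ ≤ L) (v w : EuclideanSpace ℝ (Fin d)) :
    |fderiv ℝ (fderiv ℝ U) y v w| ≤ L * ‖v‖ * ‖w‖ := by
  have h1 : iteratedFDeriv ℝ 2 U y ![v, w] = fderiv ℝ (fderiv ℝ U) y v w := by
    rw [iteratedFDeriv_two_apply]; simp
  have h2 := (iteratedFDeriv ℝ 2 U y).le_opNorm ![v, w]
  rw [h1] at h2
  simp only [Fin.prod_univ_two, Matrix.cons_val_zero, Matrix.cons_val_one,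
    Matrix.head_cons] at h2
  calc |fderiv ℝ (fderiv ℝ U) y v w| = ‖fderiv ℝ (fderiv ℝ U) y v w‖ := rfl
    _ ≤ ‖iteratedFDeriv ℝ 2 U y‖ * (‖v‖ * ‖w‖) := h2
    _ ≤ L * ‖v‖ * ‖w‖ := by rw [← mul_assoc]; gcongr

lemma stmt5_eig_eq {d : ℕ} (U : EuclideanSpace ℝ (Fin d) → ℝ) (y : EuclideanSpace ℝ (Fin d))
    (hU : ContDiff ℝ 3 U) (i : Fin d) :
    (stmt5_hess_herm U y hU).eigenvalues i =
      fderiv ℝ (fderiv ℝ U) y ((stmt5_hess_herm U y hU).eigenvectorBasis i)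
        ((stmt5_hess_herm U y hU).eigenvectorBasis i) := by
  have h := (stmt5_hess_herm U y hU).eigenvalues_eq i
  set v := (stmt5_hess_herm U y hU).eigenvectorBasis i with hv
  rw [h]
  simp only [star_trivial, RCLike.re_to_real]
  rw [stmt5_expand (fderiv ℝ (fderiv ℝ U) y) v v, dotProduct]
  refine Finset.sum_congr rfl fun j _ => ?_
  rw [Matrix.mulVec, dotProduct, Finset.mul_sum]
  refine Finset.sum_congr rfl fun k _ => ?_
  rw [stmt5_hessMat_eq]
  ring

lemma stmt5_det_eq {d : ℕ} (H : Matrix (Fin d) (Fin d) ℝ) (hH : H.IsHermitian) (δ : ℝ) :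
    ((1 : Matrix (Fin d) (Fin d) ℝ) - δ • H).det = ∏ i, (1 - δ * hH.eigenvalues i) := by
  set V : Matrix (Fin d) (Fin d) ℝ := (hH.eigenvectorUnitary : Matrix (Fin d) (Fin d) ℝ)
  have h1 : V * star V = 1 := Matrix.mem_unitaryGroup_iff.mp hH.eigenvectorUnitary.2
  have hdiag : Matrix.diagonal (RCLike.ofReal ∘ hH.eigenvalues)
      = Matrix.diagonal hH.eigenvalues := by congr 1
  have key : (1 : Matrix (Fin d) (Fin d) ℝ) - δ • H
      = V * ((1 : Matrix (Fin d) (Fin d) ℝ) - δ • Matrix.diagonal hH.eigenvalues) * star V := by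
    rw [Matrix.mul_sub, Matrix.sub_mul, Matrix.mul_one, h1]
    rw [Matrix.mul_smul, Matrix.smul_mul]
    rw [← hdiag]
    exact congrArg (fun M => 1 - δ • M) hH.spectral_theorem
  rw [key, Matrix.det_mul, Matrix.det_mul]
  have h2 : V.det * (star V).det = 1 := by
    rw [← Matrix.det_mul, h1, Matrix.det_one]
  have h3 : ((1 : Matrix (Fin d) (Fin d) ℝ) - δ • Matrix.diagonal hH.eigenvalues)
      = Matrix.diagonal (fun i => 1 - δ * hH.eigenvalues i) := by
    ext j k
    by_cases h : j = k <;>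
      simp [h, Matrix.one_apply, Matrix.diagonal_apply, Matrix.sub_apply]
  rw [h3, Matrix.det_diagonal]
  linear_combination (∏ i, (1 - δ * hH.eigenvalues i)) * h2

lemma stmt5_num {d : ℕ} (hd : 0 < d) (L δ : ℝ) (hL : 0 < L) (hδ0 : 0 < δ)
    (hδ : δ ≤ 1 / (64 * d ^ 2 * L)) (μ : Fin d → ℝ) (hμ : ∀ i, |μ i| ≤ L) :
    0 < ∏ i, (1 - δ * μ i) ∧
      |(∏ i, (1 - δ * μ i))⁻¹ - 1| ≤ 2 * δ * (d : ℝ) * L := by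
  set a : ℝ := δ * L with ha_def
  have hd1 : (1 : ℝ) ≤ d := by exact_mod_cast hd
  have hδ' : δ * (64 * d ^ 2 * L) ≤ 1 := by
    rw [le_div_iff₀ (by positivity)] at hδ; linarith
  have ha0 : 0 ≤ a := by positivity
  have hda : (d : ℝ) * a ≤ 1 / 64 := by nlinarith
  have ha : a ≤ 1 / 64 := by nlinarith
  have hfac : ∀ i, 1 - a ≤ 1 - δ * μ i ∧ 1 - δ * μ i ≤ 1 + a := by
    intro i
    have h1 := abs_le.mp (hμ i)
    constructor <;> nlinarith [h1.1, h1.2]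
  set P : ℝ := ∏ i, (1 - δ * μ i) with hP
  have hlow : (1 - a) ^ d ≤ P := by
    calc (1 - a) ^ d = ∏ _i : Fin d, (1 - a) := by
          rw [Finset.prod_const, Finset.card_univ, Fintype.card_fin]
      _ ≤ P := Finset.prod_le_prod (fun i _ => by linarith) (fun i _ => (hfac i).1)
  have hup : P ≤ (1 + a) ^ d := by
    calc P ≤ ∏ _i : Fin d, (1 + a) :=
          Finset.prod_le_prod (fun i _ => by linarith [(hfac i).1]) (fun i _ => (hfac i).2)
      _ = (1 + a) ^ d := by rw [Finset.prod_const, Finset.card_univ, Fintype.card_fin]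
  have hbern : 1 - (d : ℝ) * a ≤ (1 - a) ^ d := by
    have := one_add_mul_le_pow (a := -a) (by linarith) d
    calc 1 - (d : ℝ) * a = 1 + (d : ℝ) * (-a) := by ring
      _ ≤ (1 + -a) ^ d := this
      _ = (1 - a) ^ d := by ring_nf
  have hmulpow : (1 + a) ^ d * (1 - a) ^ d ≤ 1 := by
    rw [← mul_pow]
    have h1 : (1 + a) * (1 - a) = 1 - a ^ 2 := by ring
    rw [h1]
    exact pow_le_one₀ (by nlinarith) (by nlinarith)
  have hPpos : 0 < P := lt_of_lt_of_le (by linarith) (hbern.trans hlow)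
  refine ⟨hPpos, ?_⟩
  have hQpos : 0 < P⁻¹ := inv_pos.mpr hPpos
  have hPQ : P * P⁻¹ = 1 := mul_inv_cancel₀ (ne_of_gt hPpos)
  have hkey : P * (1 - (d : ℝ) * a) ≤ 1 := by
    calc P * (1 - (d : ℝ) * a) ≤ (1 + a) ^ d * (1 - a) ^ d := by
          apply mul_le_mul hup (hbern) (by linarith) (by positivity)
      _ ≤ 1 := hmulpow
  have h64 : (0:ℝ) < 1 - (d : ℝ) * a := by linarith
  have hub : P⁻¹ ≤ 1 + 2 * ((d : ℝ) * a) := by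
    nlinarith [mul_le_mul_of_nonneg_right (hbern.trans hlow) hQpos.le,
      mul_nonneg (by positivity : (0:ℝ) ≤ (d:ℝ) * a)
        (by linarith : (0:ℝ) ≤ 1 - 2 * ((d:ℝ) * a))]
  have hlb : 1 - 2 * ((d : ℝ) * a) ≤ P⁻¹ := by
    nlinarith [mul_le_mul_of_nonneg_right hkey hQpos.le]
  have heq : 2 * ((d : ℝ) * a) = 2 * δ * (d : ℝ) * L := by rw [ha_def]; ring
  rw [abs_le]
  constructor <;> linarith

theorem stmt5 {d : ℕ} (hd : 0 < d) (U : EuclideanSpace ℝ (Fin d) → ℝ)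
    (L : ℝ) (hL : 0 < L) (hU : ContDiff ℝ 3 U)
    (hgrad0 : gradient U 0 = 0)
    (hHess : ∀ z, ‖iteratedFDeriv ℝ 2 U z‖ ≤ L)
    (hD3 : ∀ z, ‖iteratedFDeriv ℝ 3 U z‖ ≤ L)
    (T : EuclideanSpace ℝ (Fin d)) (hT : ‖T‖ ≤ Real.sqrt L)
    (δ : ℝ) (hδ0 : 0 < δ) (hδ : δ ≤ 1 / (64 * d ^ 2 * L))
    (x y : EuclideanSpace ℝ (Fin d))
    (hxy : x = y - δ • gradient U y + Real.sqrt (2 * δ) • T) :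
    IsUnit (1 - δ • hessMat U y) ∧
      |((1 - δ • hessMat U y).det)⁻¹ - 1| ≤
        2 * δ * (d : ℝ) * L * (‖x‖ + 1) := by
  have hH := stmt5_hess_herm U y hU
  set μ := hH.eigenvalues with hμdef
  have hμ : ∀ i, |μ i| ≤ L := by
    intro i
    rw [hμdef, stmt5_eig_eq U y hU i]
    have h := stmt5_hess_bound U y L (hHess y) (hH.eigenvectorBasis i) (hH.eigenvectorBasis i)
    have hnorm : ‖hH.eigenvectorBasis i‖ = 1 := hH.eigenvectorBasis.orthonormal.1 i
    rw [hnorm] at h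
    simpa using h
  have hdet : (1 - δ • hessMat U y).det = ∏ i, (1 - δ * μ i) := stmt5_det_eq _ hH δ
  obtain ⟨hPpos, habs⟩ := stmt5_num hd L δ hL hδ0 hδ μ hμ
  constructor
  · rw [Matrix.isUnit_iff_isUnit_det, isUnit_iff_ne_zero, hdet]
    exact ne_of_gt hPpos
  · rw [hdet]
    calc |(∏ i, (1 - δ * μ i))⁻¹ - 1| ≤ 2 * δ * (d : ℝ) * L := habs
      _ ≤ 2 * δ * (d : ℝ) * L * (‖x‖ + 1) := by
          nlinarith [norm_nonneg x, mul_pos (mul_pos (mul_pos (by norm_num : (0:ℝ) < 2) hδ0)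
            (by exact_mod_cast hd : (0:ℝ) < d)) hL]
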